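/- With |Ω(·)| multiplicative on squarefree integers and 0 < |Ω(p)| < p, for squarefree d₁, d₂ one has gcd(d₁,d₂)/|Ω(gcd(d₁,d₂))| = ∑_{f ∣ d₁, f ∣ d₂} (1/|Ω(f)|) ∏_{p ∣ f} (p − |Ω(p)|) (Möbius-type inversion identity). -/

import Mathlib

open Finset

theorem omega_gcd_moebius_inversion (ω : ℕ → ℕ)
    (hmul : ∀ d : ℕ, Squarefree d → ω d = ∏ p ∈ d.primeFactors, ω p)
    (hp : ∀ p : ℕ, p.Prime → 0 < ω p ∧ ω p < p)
    (d₁ d₂ : ℕ) (h₁ : Squarefree d₁) (h₂ : Squarefree d₂) :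
    (Nat.gcd d₁ d₂ : ℚ) / (ω (Nat.gcd d₁ d₂) : ℚ) =
      ∑ f ∈ (Nat.gcd d₁ d₂).divisors,
        (1 / (ω f : ℚ)) * ∏ p ∈ f.primeFactors, ((p : ℚ) - (ω p : ℚ)) := by
  set g := Nat.gcd d₁ d₂ with hg
  have hgsf : Squarefree g := h₁.squarefree_of_dvd (Nat.gcd_dvd_left _ _)
  have hg0 : g ≠ 0 := hgsf.ne_zero
  -- rewrite each divisor term as a product over prime factors
  have hterm : ∀ f ∈ g.divisors,
      (1 / (ω f : ℚ)) * ∏ p ∈ f.primeFactors, ((p : ℚ) - (ω p : ℚ)) =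
      ∏ p ∈ f.primeFactors, (((p : ℚ) - (ω p : ℚ)) / (ω p : ℚ)) := by
    intro f hf
    have hfsf : Squarefree f := hgsf.squarefree_of_dvd (Nat.dvd_of_mem_divisors hf)
    have hωp : ∀ p ∈ f.primeFactors, (ω p : ℚ) ≠ 0 := by
      intro p hpf
      exact_mod_cast ((hp p (Nat.prime_of_mem_primeFactors hpf)).1).ne'
    rw [hmul f hfsf]
    push_cast
    rw [Finset.prod_div_distrib, div_eq_mul_inv, one_mul, mul_comm, ← Finset.prod_inv_distrib,
      div_eq_mul_inv, Finset.prod_inv_distrib]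
  rw [Finset.sum_congr rfl hterm]
  -- the sum over divisors equals sum over powersets of primeFactors
  have hdiv : g.divisors = {d ∈ g.divisors | Squarefree d} := by
    ext d
    simp only [Finset.mem_filter]
    exact ⟨fun hd => ⟨hd, hgsf.squarefree_of_dvd (Nat.dvd_of_mem_divisors hd)⟩, fun h => h.1⟩
  rw [hdiv, Nat.sum_divisors_filter_squarefree hg0]
  have hfac : (UniqueFactorizationMonoid.normalizedFactors g).toFinset = g.primeFactors := by
    rw [Nat.factors_eq]; rfl
  rw [hfac]
  have hstep : ∀ s ∈ g.primeFactors.powerset,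
      (∏ p ∈ (s.val.prod : ℕ).primeFactors, (((p : ℚ) - (ω p : ℚ)) / (ω p : ℚ))) =
      ∏ p ∈ s, (((p : ℚ) - (ω p : ℚ)) / (ω p : ℚ)) := by
    intro s hs
    have hsub := Finset.mem_powerset.mp hs
    have : (s.val.prod : ℕ) = ∏ p ∈ s, p := by
      rw [Finset.prod_eq_multiset_prod, Multiset.map_id']
    rw [this, Nat.primeFactors_prod
      (fun p hps => Nat.prime_of_mem_primeFactors (hsub hps))]
  rw [Finset.sum_congr rfl hstep]
  have hsum : ∑ s ∈ g.primeFactors.powerset, ∏ p ∈ s, (((p : ℚ) - (ω p : ℚ)) / (ω p : ℚ))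
      = ∏ p ∈ g.primeFactors, ((((p : ℚ) - (ω p : ℚ)) / (ω p : ℚ)) + 1) := by
    rw [Finset.prod_add]
    exact Finset.sum_congr rfl (fun t ht => by simp)
  rw [hsum]
  have hfinal : ∀ p ∈ g.primeFactors,
      (((p : ℚ) - (ω p : ℚ)) / (ω p : ℚ)) + 1 = (p : ℚ) / (ω p : ℚ) := by
    intro p hpf
    have hpp := Nat.prime_of_mem_primeFactors hpf
    have hωp : (ω p : ℚ) ≠ 0 := by exact_mod_cast ((hp p hpp).1).ne'
    field_simp
    ring
  rw [Finset.prod_congr rfl hfinal, Finset.prod_div_distrib, hmul g hgsf]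
  rw [← Nat.cast_prod, Nat.prod_primeFactors_of_squarefree hgsf]
  push_cast
  rfl
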